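/- Let X be a locally finite preordered set and n ≥ 0. The (n+1)-th term C_n of the coradical filtration of C = IC(X) (defined by C_0 = coradical, C_n = C_0 ∧ C_{n-1}, where U ∧ V = Δ^{-1}(U ⊗ C + C ⊗ V)) equals the span of all e_{x,y} such that the interval [x,y] has length at most n, i.e., every chain x = x_0 < x_1 < … < x_m = y (with strict inequalities meaning x_i ≤ x_{i+1} but not x_{i+1} ≤ x_i) has m ≤ n. -/

import Mathlib

open TensorProduct

/-- The underlying vector space of the incidence coalgebra `IC(X)`:
functions with finite support on the set of pairs `(x, y)` with `x ≤ y`. -/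
abbrev IC (k X : Type*) [Field k] [Preorder X] : Type _ :=
  {p : X × X // p.1 ≤ p.2} →₀ k

/-- The basis element `e_{x,y}` of the incidence coalgebra. -/
noncomputable def e (k : Type*) {X : Type*} [Field k] [Preorder X] (x y : X) (h : x ≤ y) :
    IC k X :=
  Finsupp.single ⟨(x, y), h⟩ 1

/-- The comultiplication `Δ(e_{x,y}) = Σ_{x ≤ z ≤ y} e_{x,z} ⊗ e_{z,y}`. -/
noncomputable def Δ (k : Type*) {X : Type*} [Field k] [Preorder X] [LocallyFiniteOrder X] :
    IC k X →ₗ[k] IC k X ⊗[k] IC k X :=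
  Finsupp.lsum k fun p => LinearMap.toSpanSingleton k _
    (∑ z ∈ (Finset.Icc p.1.1 p.1.2).attach,
      e k p.1.1 z.1 (Finset.mem_Icc.mp z.2).1 ⊗ₜ[k] e k z.1 p.1.2 (Finset.mem_Icc.mp z.2).2)

open Classical in
/-- The counit `ε(e_{x,y}) = δ_{x,y}`. -/
noncomputable def ε (k : Type*) {X : Type*} [Field k] [Preorder X] : IC k X →ₗ[k] k :=
  Finsupp.lsum k fun p => LinearMap.toSpanSingleton k k (if p.1.1 = p.1.2 then 1 else 0)

/-- The left action of `C* = Module.Dual k (IC k X)` on `C = IC k X` induced by the right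
comodule structure: `c* → c = Σ c*(c₂) c₁`. -/
noncomputable def act (k : Type*) {X : Type*} [Field k] [Preorder X] [LocallyFiniteOrder X]
    (f : Module.Dual k (IC k X)) : IC k X →ₗ[k] IC k X :=
  (TensorProduct.rid k (IC k X)).toLinearMap ∘ₗ TensorProduct.map LinearMap.id f ∘ₗ Δ k

/-- The right action of `C*` on `C`: `c ← c* = Σ c*(c₁) c₂`. -/
noncomputable def actR (k : Type*) {X : Type*} [Field k] [Preorder X] [LocallyFiniteOrder X]
    (f : Module.Dual k (IC k X)) : IC k X →ₗ[k] IC k X :=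
  (TensorProduct.lid k (IC k X)).toLinearMap ∘ₗ TensorProduct.map f LinearMap.id ∘ₗ Δ k

/-- The dual basis functional `p_{x,y}`. -/
noncomputable def pfun (k : Type*) {X : Type*} [Field k] [Preorder X] (x y : X) (h : x ≤ y) :
    Module.Dual k (IC k X) :=
  Finsupp.lapply ⟨(x, y), h⟩

/-- A subspace `D ⊆ IC(X)` is a subcoalgebra if `Δ(D) ⊆ D ⊗ D`. -/
def IsSubcoalgebra (k : Type*) {X : Type*} [Field k] [Preorder X] [LocallyFiniteOrder X]
    (D : Submodule k (IC k X)) : Prop :=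
  ∀ c ∈ D, Δ k c ∈ LinearMap.range (TensorProduct.map D.subtype D.subtype)

/-- A subcoalgebra is simple if it is nonzero and has no nonzero proper subcoalgebras. -/
def IsSimpleSubcoalgebra (k : Type*) {X : Type*} [Field k] [Preorder X] [LocallyFiniteOrder X]
    (D : Submodule k (IC k X)) : Prop :=
  IsSubcoalgebra k D ∧ D ≠ ⊥ ∧
    ∀ N : Submodule k (IC k X), N ≤ D → IsSubcoalgebra k N → N = ⊥ ∨ N = D

/-- The coradical of `IC(X)`: the sum of all its simple subcoalgebras. -/
noncomputable def coradical (k X : Type*) [Field k] [Preorder X] [LocallyFiniteOrder X] :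
    Submodule k (IC k X) :=
  sSup {D : Submodule k (IC k X) | IsSimpleSubcoalgebra k D}

/-- The wedge `U ∧ V = Δ⁻¹(U ⊗ C + C ⊗ V)` of two subspaces of `C = IC(X)`. -/
noncomputable def wedge (k : Type*) {X : Type*} [Field k] [Preorder X] [LocallyFiniteOrder X]
    (U V : Submodule k (IC k X)) : Submodule k (IC k X) :=
  Submodule.comap (Δ k)
    (LinearMap.range (TensorProduct.map U.subtype (LinearMap.id (R := k) (M := IC k X))) ⊔
      LinearMap.range (TensorProduct.map (LinearMap.id (R := k) (M := IC k X)) V.subtype))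

/-- The coradical filtration: `C_0` is the coradical and `C_n = C_0 ∧ C_{n-1}`. -/
noncomputable def coradFil (k X : Type*) [Field k] [Preorder X] [LocallyFiniteOrder X] :
    ℕ → Submodule k (IC k X)
  | 0 => coradical k X
  | n + 1 => wedge k (coradical k X) (coradFil k X n)


section Aux
set_option linter.unusedSectionVars false
set_option maxHeartbeats 1000000
set_option synthInstance.maxHeartbeats 400000

variable {k X : Type*} [Field k] [Preorder X] [LocallyFiniteOrder X]

/-- The set of pairs whose interval has length at most `n`. -/
def sset (X : Type*) [Preorder X] (n : ℕ) : Set {p : X × X // p.1 ≤ p.2} :=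
  {q | ∀ (m : ℕ) (ch : ℕ → X), ch 0 = q.1.1 → ch m = q.1.2 →
    (∀ i < m, ch i ≤ ch (i + 1) ∧ ¬ ch (i + 1) ≤ ch i) → m ≤ n}

lemma chain_mono {m : ℕ} {ch : ℕ → X} (h : ∀ i < m, ch i ≤ ch (i + 1)) :
    ∀ i j, i ≤ j → j ≤ m → ch i ≤ ch j := by
  intro i j hij hjm
  induction j with
  | zero => exact Nat.le_zero.mp hij ▸ le_rfl
  | succ j ih =>
    rcases Nat.eq_or_lt_of_le hij with rfl | hlt
    · exact le_rfl
    · exact (ih (Nat.lt_succ_iff.mp hlt) (le_of_lt hjm)).trans (h j hjm)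

lemma mem_sset_zero {q : {p : X × X // p.1 ≤ p.2}} : q ∈ sset X 0 ↔ q.1.2 ≤ q.1.1 := by
  constructor
  · intro hq
    by_contra hn
    have := hq 1 (fun i => if i = 0 then q.1.1 else q.1.2) (by simp) (by simp)
      (by intro i hi; interval_cases i; simpa using ⟨q.2, hn⟩)
    omega
  · intro hle m ch h0 hm hch
    by_contra hn
    push_neg at hn
    have h1 : ch 1 ≤ ch m := chain_mono (fun i hi => (hch i hi).1) 1 m (by omega) le_rfl
    exact (hch 0 (by omega)).2 (by rw [h0]; exact h1.trans (hm ▸ hle))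

lemma Δ_e (x y : X) (h : x ≤ y) :
    Δ k (e k x y h) = ∑ z ∈ (Finset.Icc x y).attach,
      e k x z.1 (Finset.mem_Icc.mp z.2).1 ⊗ₜ[k] e k z.1 y (Finset.mem_Icc.mp z.2).2 := by
  simp [Δ, e, Finsupp.lsum_single, LinearMap.toSpanSingleton_apply]

end Aux
section Aux2
set_option linter.unusedSectionVars false
set_option maxHeartbeats 1000000
set_option synthInstance.maxHeartbeats 400000
open Classical
variable {k X : Type*} [Field k] [Preorder X] [LocallyFiniteOrder X]

lemma pfun_e (a b : X) (hab : a ≤ b) (x y : X) (h : x ≤ y) :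
    pfun k a b hab (e k x y h) =
      if (⟨(x, y), h⟩ : {p : X × X // p.1 ≤ p.2}) = ⟨(a, b), hab⟩ then 1 else 0 := by
  simp [pfun, e, Finsupp.single_apply]

lemma actR_e (f : Module.Dual k (IC k X)) (x y : X) (h : x ≤ y) :
    actR k f (e k x y h) = ∑ z ∈ (Finset.Icc x y).attach,
      f (e k x z.1 (Finset.mem_Icc.mp z.2).1) • e k z.1 y (Finset.mem_Icc.mp z.2).2 := by
  simp only [actR, LinearMap.coe_comp, LinearEquiv.coe_coe, Function.comp_apply, Δ_e, map_sum,
    TensorProduct.map_tmul, TensorProduct.lid_tmul, LinearMap.id_coe, id_eq]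

lemma act_e (f : Module.Dual k (IC k X)) (x y : X) (h : x ≤ y) :
    act k f (e k x y h) = ∑ z ∈ (Finset.Icc x y).attach,
      f (e k z.1 y (Finset.mem_Icc.mp z.2).2) • e k x z.1 (Finset.mem_Icc.mp z.2).1 := by
  simp only [act, LinearMap.coe_comp, LinearEquiv.coe_coe, Function.comp_apply, Δ_e, map_sum,
    TensorProduct.map_tmul, TensorProduct.rid_tmul, LinearMap.id_coe, id_eq]

lemma actR_pfun_e {x y z : X} (h : x ≤ y) (h1 : x ≤ z) (h2 : z ≤ y) :
    actR k (pfun k x z h1) (e k x y h) = e k z y h2 := by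
  rw [actR_e]
  rw [Finset.sum_eq_single_of_mem (⟨z, Finset.mem_Icc.mpr ⟨h1, h2⟩⟩ :
    {w // w ∈ Finset.Icc x y}) (Finset.mem_attach _ _)]
  · simp [pfun_e]
  · intro w _ hw
    rw [pfun_e, if_neg, zero_smul]
    intro hc
    simp only [Subtype.mk.injEq, Prod.mk.injEq] at hc
    exact hw (Subtype.ext hc.2)

lemma act_pfun_e {x y z : X} (h : x ≤ y) (h1 : x ≤ z) (h2 : z ≤ y) :
    act k (pfun k z y h2) (e k x y h) = e k x z h1 := by
  rw [act_e]
  rw [Finset.sum_eq_single_of_mem (⟨z, Finset.mem_Icc.mpr ⟨h1, h2⟩⟩ :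
    {w // w ∈ Finset.Icc x y}) (Finset.mem_attach _ _)]
  · simp [pfun_e]
  · intro w _ hw
    rw [pfun_e, if_neg, zero_smul]
    intro hc
    simp only [Subtype.mk.injEq, Prod.mk.injEq] at hc
    exact hw (Subtype.ext hc.1)

lemma actR_pfun_ne {a x y z : X} (h : x ≤ y) (haz : a ≤ z)
    (hne : ¬ (x = a ∧ z ∈ Finset.Icc x y)) :
    actR k (pfun k a z haz) (e k x y h) = 0 := by
  rw [actR_e, Finset.sum_eq_zero]
  intro w _
  rw [pfun_e, if_neg, zero_smul]
  intro hc
  simp only [Subtype.mk.injEq, Prod.mk.injEq] at hc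
  exact hne ⟨hc.1, hc.2 ▸ w.2⟩

lemma act_pfun_ne {b x y z : X} (h : x ≤ y) (hzb : z ≤ b)
    (hne : ¬ (y = b ∧ z ∈ Finset.Icc x y)) :
    act k (pfun k z b hzb) (e k x y h) = 0 := by
  rw [act_e, Finset.sum_eq_zero]
  intro w _
  rw [pfun_e, if_neg, zero_smul]
  intro hc
  simp only [Subtype.mk.injEq, Prod.mk.injEq] at hc
  exact hne ⟨hc.2, hc.1 ▸ w.2⟩

end Aux2
section Aux3
set_option linter.unusedSectionVars false
set_option maxHeartbeats 1000000
set_option synthInstance.maxHeartbeats 400000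
open Classical
variable {k X : Type*} [Field k] [Preorder X] [LocallyFiniteOrder X]

lemma act_mem {N : Submodule k (IC k X)} (hN : IsSubcoalgebra k N)
    (f : Module.Dual k (IC k X)) {c : IC k X} (hc : c ∈ N) : act k f c ∈ N := by
  obtain ⟨t, ht⟩ := hN c hc
  have : act k f c = (TensorProduct.rid k (IC k X)).toLinearMap
      (TensorProduct.map LinearMap.id f (TensorProduct.map N.subtype N.subtype t)) := by
    simp [act, ht]
  rw [this]
  clear this ht
  induction t with
  | zero => simp only [map_zero]; exact N.zero_mem
  | tmul m m' =>
    simp only [TensorProduct.map_tmul, LinearEquiv.coe_coe, LinearMap.id_coe, id_eq,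
      TensorProduct.rid_tmul, Submodule.coe_subtype]
    exact N.smul_mem _ m.2
  | add t1 t2 h1 h2 =>
    simp only [map_add]
    exact N.add_mem h1 h2

lemma actR_mem {N : Submodule k (IC k X)} (hN : IsSubcoalgebra k N)
    (f : Module.Dual k (IC k X)) {c : IC k X} (hc : c ∈ N) : actR k f c ∈ N := by
  obtain ⟨t, ht⟩ := hN c hc
  have : actR k f c = (TensorProduct.lid k (IC k X)).toLinearMap
      (TensorProduct.map f LinearMap.id (TensorProduct.map N.subtype N.subtype t)) := by
    simp [actR, ht]
  rw [this]
  clear this ht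
  induction t with
  | zero => simp only [map_zero]; exact N.zero_mem
  | tmul m m' =>
    simp only [TensorProduct.map_tmul, LinearEquiv.coe_coe, LinearMap.id_coe, id_eq,
      TensorProduct.lid_tmul, Submodule.coe_subtype]
    exact N.smul_mem _ m'.2
  | add t1 t2 h1 h2 =>
    simp only [map_add]
    exact N.add_mem h1 h2

lemma e_eq_single (q : {p : X × X // p.1 ≤ p.2}) :
    Finsupp.single q (1 : k) = e k q.1.1 q.1.2 q.2 := rfl

lemma Tcoeff (a b : X) (hab : a ≤ b) (c : IC k X) :
    act k (pfun k b b le_rfl) (actR k (pfun k a a le_rfl) c)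
      = c ⟨(a, b), hab⟩ • e k a b hab := by
  induction c using Finsupp.induction_linear with
  | zero => simp
  | add c1 c2 h1 h2 => simp [h1, h2, add_smul]
  | single q r =>
    obtain ⟨⟨u, v⟩, huv⟩ := q
    have hq : (Finsupp.single (⟨(u, v), huv⟩ : {p : X × X // p.1 ≤ p.2}) r : IC k X)
        = r • e k u v huv := by
      rw [e, Finsupp.smul_single, smul_eq_mul, mul_one]
    rw [hq, map_smul, map_smul]
    by_cases ha : u = a
    · subst ha
      by_cases hb : v = b
      · subst hb
        rw [actR_pfun_e huv le_rfl huv, act_pfun_e huv huv le_rfl]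
        simp [e, Finsupp.single_apply]
      · rw [actR_pfun_e huv le_rfl huv,
          act_pfun_ne huv le_rfl (by rintro ⟨h1, -⟩; exact hb h1), smul_zero]
        simp [e, Finsupp.single_apply, Subtype.mk.injEq, Prod.mk.injEq, hb]
    · rw [actR_pfun_ne huv le_rfl (by rintro ⟨h1, -⟩; exact ha h1), map_zero, smul_zero]
      simp [e, Finsupp.single_apply, Subtype.mk.injEq, Prod.mk.injEq, ha]

lemma single_mem_of_subcoalgebra {N : Submodule k (IC k X)} (hN : IsSubcoalgebra k N)
    {c : IC k X} (hc : c ∈ N) {q : {p : X × X // p.1 ≤ p.2}} (hq : c q ≠ 0) :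
    Finsupp.single q (1 : k) ∈ N := by
  have hd : act k (pfun k q.1.2 q.1.2 le_rfl) (actR k (pfun k q.1.1 q.1.1 le_rfl) c) ∈ N :=
    act_mem hN _ (actR_mem hN _ hc)
  rw [Tcoeff q.1.1 q.1.2 q.2] at hd
  have hmem : (c q)⁻¹ • (c q • e k q.1.1 q.1.2 q.2) ∈ N := N.smul_mem _ hd
  rw [smul_smul, inv_mul_cancel₀ hq, one_smul] at hmem
  rw [e_eq_single]
  exact hmem

lemma trunc_left {N : Submodule k (IC k X)} (hN : IsSubcoalgebra k N)
    {x y z : X} {h : x ≤ y} (he : e k x y h ∈ N) (h1 : x ≤ z) (h2 : z ≤ y) :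
    e k z y h2 ∈ N := by
  have := actR_mem hN (pfun k x z h1) he
  rwa [actR_pfun_e h h1 h2] at this

lemma trunc_right {N : Submodule k (IC k X)} (hN : IsSubcoalgebra k N)
    {x y z : X} {h : x ≤ y} (he : e k x y h ∈ N) (h1 : x ≤ z) (h2 : z ≤ y) :
    e k x z h1 ∈ N := by
  have := act_mem hN (pfun k z y h2) he
  rwa [act_pfun_e h h1 h2] at this

end Aux3
section Aux4
set_option linter.unusedSectionVars false
set_option maxHeartbeats 1000000
set_option synthInstance.maxHeartbeats 400000
open Classical
variable {k X : Type*} [Field k] [Preorder X] [LocallyFiniteOrder X]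

lemma supported_eq_span (s : Set {p : X × X // p.1 ≤ p.2}) :
    (Finsupp.supported k k s : Submodule k (IC k X))
      = Submodule.span k ((fun q => Finsupp.single q (1 : k)) '' s) :=
  Finsupp.supported_eq_span_single k s

lemma supported_isSubcoalgebra {s : Set {p : X × X // p.1 ≤ p.2}}
    (hs : ∀ q ∈ s, ∀ z : X, ∀ (h1 : q.1.1 ≤ z) (h2 : z ≤ q.1.2),
      (⟨(q.1.1, z), h1⟩ : {p : X × X // p.1 ≤ p.2}) ∈ s ∧
      (⟨(z, q.1.2), h2⟩ : {p : X × X // p.1 ≤ p.2}) ∈ s) :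
    IsSubcoalgebra k (Finsupp.supported k k s) := by
  set N := (Finsupp.supported k k s : Submodule k (IC k X)) with hNdef
  intro c hc
  have hle : (Finsupp.supported k k s : Submodule k (IC k X)) ≤
      Submodule.comap (Δ k) (LinearMap.range (TensorProduct.map N.subtype N.subtype)) := by
    rw [supported_eq_span, Submodule.span_le]
    rintro _ ⟨q, hq, rfl⟩
    simp only [SetLike.mem_coe, Submodule.mem_comap]
    rw [e_eq_single, Δ_e]
    apply Submodule.sum_mem
    intro z _
    have hz := Finset.mem_Icc.mp z.2
    have m1 : e k q.1.1 z.1 hz.1 ∈ N :=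
      Finsupp.single_mem_supported k 1 (hs q hq z.1 hz.1 hz.2).1
    have m2 : e k z.1 q.1.2 hz.2 ∈ N :=
      Finsupp.single_mem_supported k 1 (hs q hq z.1 hz.1 hz.2).2
    exact ⟨(⟨_, m1⟩ : N) ⊗ₜ[k] (⟨_, m2⟩ : N), rfl⟩
  exact hle hc

lemma coeff_formula {x y z : X} (hxz : x ≤ z) (hzy : z ≤ y) (c : IC k X) :
    pfun k z y hzy (actR k (pfun k x z hxz) c) = c ⟨(x, y), hxz.trans hzy⟩ := by
  induction c using Finsupp.induction_linear with
  | zero => simp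
  | add c1 c2 h1 h2 => simp [h1, h2]
  | single q r =>
    obtain ⟨⟨u, v⟩, huv⟩ := q
    have hq : (Finsupp.single (⟨(u, v), huv⟩ : {p : X × X // p.1 ≤ p.2}) r : IC k X)
        = r • e k u v huv := by
      rw [e, Finsupp.smul_single, smul_eq_mul, mul_one]
    rw [hq, map_smul, map_smul]
    by_cases hu : u = x
    · subst hu
      by_cases hz : z ∈ Finset.Icc u v
      · rw [actR_pfun_e huv hxz (Finset.mem_Icc.mp hz).2, pfun_e]
        by_cases hv : v = y
        · subst hv
          simp [e, Finsupp.single_apply]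
        · rw [if_neg (by simp [Subtype.mk.injEq, Prod.mk.injEq, hv]), smul_zero]
          simp [e, Finsupp.single_apply, Subtype.mk.injEq, Prod.mk.injEq, hv]
      · rw [actR_pfun_ne huv hxz (by rintro ⟨-, h2⟩; exact hz h2), map_zero, smul_zero]
        have hv : v ≠ y := by
          rintro rfl
          exact hz (Finset.mem_Icc.mpr ⟨hxz, hzy⟩)
        simp [e, Finsupp.single_apply, Subtype.mk.injEq, Prod.mk.injEq, hv]
    · rw [actR_pfun_ne huv hxz (by rintro ⟨h1, -⟩; exact hu h1), map_zero, smul_zero]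
      simp [e, Finsupp.single_apply, Subtype.mk.injEq, Prod.mk.injEq, hu]

lemma phi_kills {U V : Submodule k (IC k X)} (f g : Module.Dual k (IC k X))
    (hf : ∀ u ∈ U, f u = 0) (hg : ∀ v ∈ V, g v = 0)
    {t : IC k X ⊗[k] IC k X}
    (ht : t ∈ LinearMap.range (TensorProduct.map U.subtype
        (LinearMap.id (R := k) (M := IC k X))) ⊔
      LinearMap.range (TensorProduct.map (LinearMap.id (R := k) (M := IC k X)) V.subtype)) :
    g ((TensorProduct.lid k (IC k X)) (TensorProduct.map f LinearMap.id t)) = 0 := by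
  set Φ : IC k X ⊗[k] IC k X →ₗ[k] k :=
    g ∘ₗ (TensorProduct.lid k (IC k X)).toLinearMap ∘ₗ TensorProduct.map f LinearMap.id with hΦ
  show Φ t = 0
  rw [Submodule.mem_sup] at ht
  obtain ⟨u, hu', v, hv', rfl⟩ := ht
  obtain ⟨tu, rfl⟩ := hu'
  obtain ⟨tv, rfl⟩ := hv'
  rw [map_add]
  have hu : ∀ tu, Φ (TensorProduct.map U.subtype LinearMap.id tu) = 0 := by
    intro tu
    induction tu with
    | zero => simp
    | tmul m b =>
      simp [hΦ, TensorProduct.map_tmul, TensorProduct.lid_tmul, hf m.1 m.2, (TensorProduct.lid k (IC k X)).map_zero]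
    | add t1 t2 h1 h2 => rw [map_add, map_add, h1, h2, add_zero]
  have hv : ∀ tv, Φ (TensorProduct.map LinearMap.id V.subtype tv) = 0 := by
    intro tv
    induction tv with
    | zero => simp
    | tmul a m =>
      simp [hΦ, TensorProduct.map_tmul, TensorProduct.lid_tmul, hg m.1 m.2, (TensorProduct.lid k (IC k X)).map_zero]
    | add t1 t2 h1 h2 => rw [map_add, map_add, h1, h2, add_zero]
  rw [hu tu, hv tv, add_zero]

end Aux4
section Aux5
set_option linter.unusedSectionVars false
set_option maxHeartbeats 1000000
set_option synthInstance.maxHeartbeats 400000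
open Classical
variable {k X : Type*} [Field k] [Preorder X] [LocallyFiniteOrder X]

/-- The set of pairs both of whose components are equivalent to `x`. -/
def cls (x : X) : Set {p : X × X // p.1 ≤ p.2} :=
  {q | q.1.1 ≤ x ∧ x ≤ q.1.1 ∧ q.1.2 ≤ x ∧ x ≤ q.1.2}

lemma cls_simple (x : X) :
    IsSimpleSubcoalgebra k (Finsupp.supported k k (cls x)) := by
  refine ⟨?_, ?_, ?_⟩
  · apply supported_isSubcoalgebra
    rintro q ⟨ha1, ha2, hb1, hb2⟩ z h1 h2
    exact ⟨⟨ha1, ha2, h2.trans hb1, ha2.trans h1⟩, ⟨h2.trans hb1, ha2.trans h1, hb1, hb2⟩⟩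
  · rw [Submodule.ne_bot_iff]
    refine ⟨Finsupp.single ⟨(x, x), le_rfl⟩ 1,
      Finsupp.single_mem_supported k 1 ⟨le_rfl, le_rfl, le_rfl, le_rfl⟩,
      fun hz => one_ne_zero (Finsupp.single_eq_zero.mp hz)⟩
  · intro N hND hNsub
    by_cases hN : N = ⊥
    · exact Or.inl hN
    · right
      obtain ⟨c, hcN, hc0⟩ := Submodule.ne_bot_iff N |>.mp hN
      obtain ⟨q, hqs⟩ := Finsupp.support_nonempty_iff.mpr hc0
      have hq : c q ≠ 0 := Finsupp.mem_support_iff.mp hqs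
      have hqcls : q ∈ cls x :=
        (Finsupp.mem_supported k c |>.mp (hND hcN)) hqs
      have heN : e k q.1.1 q.1.2 q.2 ∈ N := by
        rw [← e_eq_single]
        exact single_mem_of_subcoalgebra hNsub hcN hq
      refine le_antisymm hND ?_
      rw [supported_eq_span, Submodule.span_le]
      rintro _ ⟨q', hq', rfl⟩
      have h1 : q.1.1 ≤ q'.1.1 := hqcls.1.trans hq'.2.1
      have h2 : q'.1.1 ≤ q.1.2 := hq'.1.trans hqcls.2.2.2
      have e1 : e k q'.1.1 q.1.2 h2 ∈ N := trunc_left hNsub heN h1 h2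
      have h3 : q'.1.2 ≤ q.1.2 := hq'.2.2.1.trans hqcls.2.2.2
      have e2 : e k q'.1.1 q'.1.2 q'.2 ∈ N := trunc_right hNsub e1 q'.2 h3
      exact e2

lemma corad_eq : coradical k X = Finsupp.supported k k (sset X 0) := by
  refine le_antisymm (sSup_le ?_) ?_
  · intro D hD
    set s' : Set {p : X × X // p.1 ≤ p.2} :=
      {q | (Finsupp.single q (1 : k) ∈ D) ∧ q.1.2 ≤ q.1.1} with hs'
    have hND : (Finsupp.supported k k s' : Submodule k (IC k X)) ≤ D := by
      rw [supported_eq_span, Submodule.span_le]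
      rintro _ ⟨q, hq, rfl⟩
      exact hq.1
    have hNsub : IsSubcoalgebra k (Finsupp.supported k k s') := by
      apply supported_isSubcoalgebra
      rintro q ⟨hqD, hqd⟩ z h1 h2
      have heD : e k q.1.1 q.1.2 q.2 ∈ D := by rw [← e_eq_single]; exact hqD
      refine ⟨⟨?_, h2.trans hqd⟩, ⟨?_, hqd.trans h1⟩⟩
      · rw [show (Finsupp.single (⟨(q.1.1, z), h1⟩ : {p : X × X // p.1 ≤ p.2}) (1 : k) : IC k X)
          = e k q.1.1 z h1 from rfl]
        exact trunc_right hD.1 heD h1 h2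
      · rw [show (Finsupp.single (⟨(z, q.1.2), h2⟩ : {p : X × X // p.1 ≤ p.2}) (1 : k) : IC k X)
          = e k z q.1.2 h2 from rfl]
        exact trunc_left hD.1 heD h1 h2
    have hNne : (Finsupp.supported k k s' : Submodule k (IC k X)) ≠ ⊥ := by
      obtain ⟨c, hcD, hc0⟩ := Submodule.ne_bot_iff D |>.mp hD.2.1
      obtain ⟨q, hqs⟩ := Finsupp.support_nonempty_iff.mpr hc0
      have hq : c q ≠ 0 := Finsupp.mem_support_iff.mp hqs
      have heD : e k q.1.1 q.1.2 q.2 ∈ D := by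
        rw [← e_eq_single]
        exact single_mem_of_subcoalgebra hD.1 hcD hq
      have heDD : e k q.1.1 q.1.1 le_rfl ∈ D := trunc_right hD.1 heD le_rfl q.2
      rw [Submodule.ne_bot_iff]
      exact ⟨Finsupp.single ⟨(q.1.1, q.1.1), le_rfl⟩ 1,
        Finsupp.single_mem_supported k 1 ⟨heDD, le_rfl⟩,
        fun hz => one_ne_zero (Finsupp.single_eq_zero.mp hz)⟩
    rcases hD.2.2 _ hND hNsub with hbot | heq
    · exact absurd hbot hNne
    · rw [← heq]
      exact Finsupp.supported_mono (fun q hq => mem_sset_zero.mpr hq.2)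
  · rw [supported_eq_span, Submodule.span_le]
    rintro _ ⟨q, hq, rfl⟩
    have hyx : q.1.2 ≤ q.1.1 := mem_sset_zero.mp hq
    have : Finsupp.single q (1 : k) ∈ Finsupp.supported k k (cls q.1.1) :=
      Finsupp.single_mem_supported k 1 ⟨le_rfl, le_rfl, hyx, q.2⟩
    have hmem : (Finsupp.supported k k (cls q.1.1) : Submodule k (IC k X)) ∈
        {D : Submodule k (IC k X) | IsSimpleSubcoalgebra k D} := cls_simple q.1.1
    exact le_sSup hmem this

end Aux5
section Aux6
set_option linter.unusedSectionVars false
set_option maxHeartbeats 1000000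
set_option synthInstance.maxHeartbeats 400000
open Classical
variable {k X : Type*} [Field k] [Preorder X] [LocallyFiniteOrder X]

lemma step_le (n : ℕ) :
    wedge k (Finsupp.supported k k (sset X 0)) (Finsupp.supported k k (sset X n))
      ≤ Finsupp.supported k k (sset X (n + 1)) := by
  intro c hc
  rw [Finsupp.mem_supported']
  intro q hq
  simp only [sset, Set.mem_setOf_eq, not_forall] at hq
  obtain ⟨m, ch, h0, hm, hch, hmn⟩ := hq
  have hm1 : 1 ≤ m := by omega
  set x := q.1.1
  set y := q.1.2
  set z := ch 1 with hzdef
  have hxz : x ≤ z := by rw [← h0]; exact (hch 0 (by omega)).1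
  have hnzx : ¬ z ≤ x := by rw [← h0]; exact (hch 0 (by omega)).2
  have hzy : z ≤ y := by
    rw [← hm]
    exact chain_mono (fun i hi => (hch i hi).1) 1 m hm1 le_rfl
  have hz0 : (⟨(x, z), hxz⟩ : {p : X × X // p.1 ≤ p.2}) ∉ sset X 0 :=
    fun hmem => hnzx (mem_sset_zero.mp hmem)
  have hzn : (⟨(z, y), hzy⟩ : {p : X × X // p.1 ≤ p.2}) ∉ sset X n := by
    intro hmem
    have hmm : m - 1 + 1 = m := by omega
    have := hmem (m - 1) (fun i => ch (i + 1)) rfl (by show ch (m - 1 + 1) = _; rw [hmm]; exact hm)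
      (fun i hi => hch (i + 1) (by omega))
    omega
  have vanish0 : ∀ u ∈ (Finsupp.supported k k (sset X 0) : Submodule k (IC k X)),
      pfun k x z hxz u = 0 := by
    intro u hu
    exact ((Finsupp.mem_supported' (R := k) u).mp hu) _ hz0
  have vanishn : ∀ v ∈ (Finsupp.supported k k (sset X n) : Submodule k (IC k X)),
      pfun k z y hzy v = 0 := by
    intro v hv
    exact ((Finsupp.mem_supported' (R := k) v).mp hv) _ hzn
  have h2 := phi_kills (pfun k x z hxz) (pfun k z y hzy) vanish0 vanishn
    (Submodule.mem_comap.mp hc)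
  have h1 := coeff_formula hxz hzy c
  rw [show c q = c ⟨(x, y), hxz.trans hzy⟩ from rfl, ← h1]
  exact h2

lemma step_ge (n : ℕ) :
    (Finsupp.supported k k (sset X (n + 1)) : Submodule k (IC k X))
      ≤ wedge k (Finsupp.supported k k (sset X 0)) (Finsupp.supported k k (sset X n)) := by
  rw [supported_eq_span, Submodule.span_le]
  rintro _ ⟨q, hq, rfl⟩
  show Finsupp.single q (1 : k) ∈ wedge k _ _
  rw [wedge, Submodule.mem_comap, e_eq_single, Δ_e]
  apply Submodule.sum_mem
  intro z _
  have hz := Finset.mem_Icc.mp z.2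
  by_cases hzx : z.1 ≤ q.1.1
  · have mem0 : (⟨(q.1.1, z.1), hz.1⟩ : {p : X × X // p.1 ≤ p.2}) ∈ sset X 0 :=
      mem_sset_zero.mpr hzx
    exact Submodule.mem_sup_left
      ⟨(⟨e k q.1.1 z.1 hz.1, Finsupp.single_mem_supported k 1 mem0⟩ :
        (Finsupp.supported k k (sset X 0) : Submodule k (IC k X))) ⊗ₜ[k]
        e k z.1 q.1.2 hz.2, rfl⟩
  · have memn : (⟨(z.1, q.1.2), hz.2⟩ : {p : X × X // p.1 ≤ p.2}) ∈ sset X n := by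
      intro m ch h0 hm hch
      have hkey := hq (m + 1) (fun i => if i = 0 then q.1.1 else ch (i - 1))
        (by simp) (by simp [hm]) ?_
      · omega
      · intro i hi
        match i with
        | 0 =>
          simp only [if_pos rfl, if_neg (Nat.one_ne_zero)]
          rw [show (1 : ℕ) - 1 = 0 from rfl, h0]
          exact ⟨hz.1, hzx⟩
        | Nat.succ j =>
          simp only [if_neg (Nat.succ_ne_zero j), if_neg (Nat.succ_ne_zero (j + 1))]
          rw [show j + 1 - 1 = j from rfl, show j + 1 + 1 - 1 = j + 1 from rfl]
          exact hch j (by omega)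
    exact Submodule.mem_sup_right
      ⟨e k q.1.1 z.1 hz.1 ⊗ₜ[k]
        (⟨e k z.1 q.1.2 hz.2, Finsupp.single_mem_supported k 1 memn⟩ :
          (Finsupp.supported k k (sset X n) : Submodule k (IC k X))), rfl⟩

lemma coradFil_eq (n : ℕ) :
    coradFil k X n = Finsupp.supported k k (sset X n) := by
  induction n with
  | zero => exact corad_eq
  | succ n ih =>
    show wedge k (coradical k X) (coradFil k X n) = _
    rw [corad_eq, ih]
    exact le_antisymm (step_le n) (step_ge n)

end Aux6


/-- The `(n+1)`-st term `C_n` of the coradical filtration of `C = IC(X)` is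
the span of those `e_{x,y}` for which the interval `[x,y]` has length at most `n`: every
chain `x = x_0 < x_1 < … < x_m = y` (where `a < b` means `a ≤ b` and not `b ≤ a`) has
`m ≤ n`. -/
theorem statement16 (k X : Type*) [Field k] [Preorder X] [LocallyFiniteOrder X] (n : ℕ) :
    coradFil k X n = Submodule.span k
      {c | ∃ (x y : X) (h : x ≤ y),
        (∀ (m : ℕ) (ch : ℕ → X), ch 0 = x → ch m = y →
          (∀ i < m, ch i ≤ ch (i + 1) ∧ ¬ ch (i + 1) ≤ ch i) → m ≤ n) ∧
        c = e k x y h} := by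
  have hset : {c | ∃ (x y : X) (h : x ≤ y),
      (∀ (m : ℕ) (ch : ℕ → X), ch 0 = x → ch m = y →
        (∀ i < m, ch i ≤ ch (i + 1) ∧ ¬ ch (i + 1) ≤ ch i) → m ≤ n) ∧
      c = e k x y h} =
      (fun q : {p : X × X // p.1 ≤ p.2} => Finsupp.single q (1 : k)) '' sset X n := by
    ext c
    constructor
    · rintro ⟨x, y, h, hcond, rfl⟩
      exact ⟨⟨(x, y), h⟩, hcond, rfl⟩
    · rintro ⟨q, hq, rfl⟩
      exact ⟨q.1.1, q.1.2, q.2, hq, rfl⟩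
  rw [hset, ← supported_eq_span]
  exact coradFil_eq n
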